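/- Let 1 ≤ q_1 < q_2 < ... < q_m. The number of permutations of {1,...,n} having exactly k_j adjacent q_j-cycles for each j equals Σ (-1)^{Σ_j (k_j + t_j)} Π_j C(t_j, k_j) * (n - Σ_j (q_j - 1) t_j)! / Π_j t_j!, where the sum runs over all m-tuples (t_1,...,t_m) of nonnegative integers with Σ_j q_j t_j ≤ n. -/

import Mathlib

open Finset

/-- `a` with `a+1`, ..., `a+q-1` (0-indexed) form an adjacent `q`-cycle of `π`. -/
def isAdjCycle (q : ℕ) {n : ℕ} (π : Equiv.Perm (Fin n)) (a : ℕ) : Prop :=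
  a + q ≤ n ∧ ∀ i : Fin n, a ≤ i.val → i.val < a + q →
    (π i).val = if i.val = a + q - 1 then a else i.val + 1

instance (q n : ℕ) (π : Equiv.Perm (Fin n)) (a : ℕ) : Decidable (isAdjCycle q π a) := by
  unfold isAdjCycle; infer_instance

/-- The number of adjacent `q`-cycles of a permutation of `{1,...,n}`. -/
def adjCycleCount (q : ℕ) {n : ℕ} (π : Equiv.Perm (Fin n)) : ℕ :=
  ((Finset.range n).filter (isAdjCycle q π)).card

/-- `numAqC q n k` = number of permutations of `{1,...,n}` with exactly `k` adjacent `q`-cycles. -/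
def numAqC (q n k : ℕ) : ℕ :=
  (Finset.univ.filter (fun π : Equiv.Perm (Fin n) => adjCycleCount q π = k)).card


/-- number of permutations of `{1,...,n}` with exactly `k j` adjacent `Q j`-cycles for each `j`. -/
def numMulti {m : ℕ} (Q : Fin m → ℕ) (n : ℕ) (k : Fin m → ℕ) : ℕ :=
  (Finset.univ.filter
    (fun π : Equiv.Perm (Fin n) => ∀ j, adjCycleCount (Q j) π = k j)).card

/-! ### Auxiliary definitions -/

/-- A valid placement of disjoint blocks: `S j` is the set of starting points of
blocks of length `Q j`, all blocks within `[0,n)` and pairwise disjoint. -/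
def validP {m : ℕ} (Q : Fin m → ℕ) (n : ℕ) (S : Fin m → Finset ℕ) : Prop :=
  (∀ j, ∀ a ∈ S j, a + Q j ≤ n) ∧
  ∀ j, ∀ a ∈ S j, ∀ j', ∀ a' ∈ S j', (j, a) ≠ (j', a') →
    Disjoint (Finset.Ico a (a + Q j)) (Finset.Ico a' (a' + Q j'))

instance {m : ℕ} (Q : Fin m → ℕ) (n : ℕ) (S : Fin m → Finset ℕ) :
    Decidable (validP Q n S) := by unfold validP; infer_instance

/-- All valid placements with `t j` blocks of length `Q j`. -/
def placements {m : ℕ} (Q : Fin m → ℕ) (n : ℕ) (t : Fin m → ℕ) : Finset (Fin m → Finset ℕ) :=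
  (Fintype.piFinset fun _ => (range n).powerset).filter
    (fun S => validP Q n S ∧ ∀ j, (S j).card = t j)

/-- The starting points of adjacent `q`-cycles of `π`. -/
def startsF (q : ℕ) {n : ℕ} (π : Equiv.Perm (Fin n)) : Finset ℕ :=
  (Finset.range n).filter (isAdjCycle q π)

lemma adjCycleCount_eq_card {q n : ℕ} (π : Equiv.Perm (Fin n)) :
    adjCycleCount q π = (startsF q π).card := rfl

lemma adjCycleCount_le {q n : ℕ} (π : Equiv.Perm (Fin n)) : adjCycleCount q π ≤ n := by
  classical
  calc adjCycleCount q π ≤ (Finset.range n).card := Finset.card_filter_le _ _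
  _ = n := Finset.card_range n

/-- Distinct adjacent cycles of the same permutation occupy disjoint intervals. -/
lemma adj_disjoint {n : ℕ} (π : Equiv.Perm (Fin n)) {q q' a a' : ℕ}
    (hq : 1 ≤ q) (hq' : 1 ≤ q')
    (h : isAdjCycle q π a) (h' : isAdjCycle q' π a')
    (hne : (q, a) ≠ (q', a')) :
    Disjoint (Finset.Ico a (a + q)) (Finset.Ico a' (a' + q')) := by
  by_contra hcon
  rw [Finset.not_disjoint_iff] at hcon
  obtain ⟨x, hx, hx'⟩ := hcon
  rw [Finset.mem_Ico] at hx hx'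
  rcases le_or_gt (a' + q') (a + q) with hle | hlt
  · -- e = a' + q' - 1 is in both intervals
    have he : a' + q' - 1 < n := by have := h.1; omega
    have h1 := h'.2 ⟨a' + q' - 1, he⟩ (show a' ≤ a' + q' - 1 by omega)
      (show a' + q' - 1 < a' + q' by omega)
    have h2 := h.2 ⟨a' + q' - 1, he⟩ (show a ≤ a' + q' - 1 by omega)
      (show a' + q' - 1 < a + q by omega)
    rw [show ((⟨a' + q' - 1, he⟩ : Fin n)).val = a' + q' - 1 from rfl] at h1 h2
    rw [if_pos (show a' + q' - 1 = a' + q' - 1 from rfl)] at h1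
    by_cases htop : a' + q' - 1 = a + q - 1
    · rw [if_pos htop] at h2
      have ha : a = a' := by omega
      have hqq : q = q' := by omega
      exact hne (by rw [ha, hqq])
    · rw [if_neg htop] at h2; omega
  · -- e = a + q - 1 is in both intervals, maps to a and to e+1 : contradiction
    have he : a + q - 1 < n := by have := h.1; omega
    have h1 := h.2 ⟨a + q - 1, he⟩ (show a ≤ a + q - 1 by omega)
      (show a + q - 1 < a + q by omega)
    have h2 := h'.2 ⟨a + q - 1, he⟩ (show a' ≤ a + q - 1 by omega)
      (show a + q - 1 < a' + q' by omega)
    rw [show ((⟨a + q - 1, he⟩ : Fin n)).val = a + q - 1 from rfl] at h1 h2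
    rw [if_pos (show a + q - 1 = a + q - 1 from rfl)] at h1
    rw [if_neg (show a + q - 1 ≠ a' + q' - 1 by omega)] at h2
    omega

/-- The set of points covered by the blocks of a placement. -/
def covered {m : ℕ} (Q : Fin m → ℕ) (S : Fin m → Finset ℕ) : Finset ℕ :=
  (Finset.univ.sigma fun j : Fin m => S j).biUnion fun p => Finset.Ico p.2 (p.2 + Q p.1)

lemma covered_card {m n : ℕ} {Q : Fin m → ℕ} {S : Fin m → Finset ℕ}
    (hval : validP Q n S) :
    (covered Q S).card = ∑ j, Q j * (S j).card := by
  classical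
  rw [covered, Finset.card_biUnion]
  · rw [Finset.sum_sigma]
    congr 1
    ext j
    rw [Finset.sum_congr rfl (fun a _ => Nat.card_Ico a (a + Q j)), Finset.sum_congr rfl
      (fun a _ => by omega : ∀ a ∈ S j, a + Q j - a = Q j), Finset.sum_const, smul_eq_mul,
      mul_comm]
  · rintro ⟨j, a⟩ hp ⟨j', a'⟩ hp' hne
    simp only [Finset.mem_coe, Finset.mem_sigma, Finset.mem_univ, true_and] at hp hp'
    exact hval.2 j a hp j' a' hp' (by simpa [Prod.ext_iff] using fun h1 h2 => hne (by subst h1; subst h2; rfl))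

lemma covered_subset {m n : ℕ} {Q : Fin m → ℕ} {S : Fin m → Finset ℕ}
    (hval : validP Q n S) : covered Q S ⊆ Finset.range n := by
  intro x hx
  simp only [covered, Finset.mem_biUnion, Finset.mem_sigma, Finset.mem_univ, true_and,
    Finset.mem_Ico] at hx
  obtain ⟨⟨j, a⟩, ha, hx1, hx2⟩ := hx
  dsimp only at hx1 hx2
  have := hval.1 j a ha
  simp only [Finset.mem_range]
  omega

lemma validP_sum_le {m n : ℕ} {Q : Fin m → ℕ} {S : Fin m → Finset ℕ}
    (hval : validP Q n S) : ∑ j, Q j * (S j).card ≤ n := by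
  rw [← covered_card hval]
  calc (covered Q S).card ≤ (Finset.range n).card := Finset.card_le_card (covered_subset hval)
  _ = n := Finset.card_range n

/-- A family of sets of cycle starts of a fixed permutation is a valid placement. -/
lemma validP_of_starts {m n : ℕ} {Q : Fin m → ℕ} (hQinj : Function.Injective Q)
    (hQ1 : ∀ j, 1 ≤ Q j) (π : Equiv.Perm (Fin n)) {S : Fin m → Finset ℕ}
    (hS : ∀ j, S j ⊆ startsF (Q j) π) : validP Q n S := by
  constructor
  · intro j a ha
    have := hS j ha
    simp only [startsF, Finset.mem_filter] at this
    exact this.2.1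
  · intro j a ha j' a' ha' hne
    have h1 := hS j ha
    have h2 := hS j' ha'
    simp only [startsF, Finset.mem_filter] at h1 h2
    refine adj_disjoint π (hQ1 j) (hQ1 j') h1.2 h2.2 ?_
    intro hcon
    apply hne
    have e1 : Q j = Q j' := congrArg Prod.fst hcon
    have e2 : a = a' := congrArg Prod.snd hcon
    rw [hQinj e1, e2]

lemma sum_cycleCount_le {m n : ℕ} {Q : Fin m → ℕ} (hQinj : Function.Injective Q)
    (hQ1 : ∀ j, 1 ≤ Q j) (π : Equiv.Perm (Fin n)) :
    ∑ j, Q j * adjCycleCount (Q j) π ≤ n := by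
  have := validP_sum_le (validP_of_starts hQinj hQ1 π (S := fun j => startsF (Q j) π)
    (fun j => le_refl _))
  simpa [adjCycleCount_eq_card] using this
section Ext

variable {m n : ℕ} {Q : Fin m → ℕ} {S : Fin m → Finset ℕ}

lemma block_exu (hval : validP Q n S) {x : ℕ} (hx : x ∈ covered Q S) :
    ∃! p : (_ : Fin m) × ℕ, p ∈ (Finset.univ.sigma fun j : Fin m => S j) ∧
      x ∈ Finset.Ico p.2 (p.2 + Q p.1) := by
  simp only [covered, Finset.mem_biUnion] at hx
  obtain ⟨p, hp, hxp⟩ := hx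
  refine ⟨p, ⟨hp, hxp⟩, ?_⟩
  rintro ⟨j', a'⟩ ⟨hp', hxp'⟩
  obtain ⟨j, a⟩ := p
  simp only [Finset.mem_sigma, Finset.mem_univ, true_and] at hp hp'
  by_contra hne
  have hne' : (j', a') ≠ (j, a) := by
    intro hcon
    apply hne
    have e1 : j' = j := congrArg Prod.fst hcon
    have e2 : a' = a := congrArg Prod.snd hcon
    subst e1; subst e2; rfl
  have := hval.2 j' a' hp' j a hp hne'
  exact (Finset.disjoint_left.mp this hxp') hxp

/-- The block containing a covered point. -/
noncomputable def theBlock (hval : validP Q n S) {x : ℕ} (hx : x ∈ covered Q S) :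
    (_ : Fin m) × ℕ :=
  Finset.choose (fun p : (_ : Fin m) × ℕ => x ∈ Finset.Ico p.2 (p.2 + Q p.1))
    (Finset.univ.sigma fun j : Fin m => S j) (block_exu hval hx)

lemma theBlock_mem (hval : validP Q n S) {x : ℕ} (hx : x ∈ covered Q S) :
    (theBlock hval hx) ∈ (Finset.univ.sigma fun j : Fin m => S j) :=
  Finset.choose_mem (fun p : (_ : Fin m) × ℕ => x ∈ Finset.Ico p.2 (p.2 + Q p.1)) _
    (block_exu hval hx)

lemma theBlock_spec (hval : validP Q n S) {x : ℕ} (hx : x ∈ covered Q S) :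
    x ∈ Finset.Ico (theBlock hval hx).2 ((theBlock hval hx).2 + Q (theBlock hval hx).1) :=
  Finset.choose_property (fun p : (_ : Fin m) × ℕ => x ∈ Finset.Ico p.2 (p.2 + Q p.1)) _
    (block_exu hval hx)

lemma theBlock_eq (hval : validP Q n S) {x : ℕ} (hx : x ∈ covered Q S)
    {p : (_ : Fin m) × ℕ} (hp : p ∈ (Finset.univ.sigma fun j : Fin m => S j))
    (hxp : x ∈ Finset.Ico p.2 (p.2 + Q p.1)) : theBlock hval hx = p :=
  (block_exu hval hx).unique ⟨theBlock_mem hval hx, theBlock_spec hval hx⟩ ⟨hp, hxp⟩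

/-- The cycle map on covered points (identity elsewhere). -/
noncomputable def cfN (hval : validP Q n S) (x : ℕ) : ℕ :=
  if hx : x ∈ covered Q S then
    (if x = (theBlock hval hx).2 + Q (theBlock hval hx).1 - 1 then (theBlock hval hx).2
      else x + 1)
  else x

lemma cfN_block (hval : validP Q n S) {x : ℕ} {p : (_ : Fin m) × ℕ}
    (hp : p ∈ (Finset.univ.sigma fun j : Fin m => S j))
    (hxp : x ∈ Finset.Ico p.2 (p.2 + Q p.1)) :
    cfN hval x = (if x = p.2 + Q p.1 - 1 then p.2 else x + 1) := by
  have hx : x ∈ covered Q S := Finset.mem_biUnion.mpr ⟨p, hp, hxp⟩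
  rw [cfN, dif_pos hx, theBlock_eq hval hx hp hxp]

lemma cfN_mem (hval : validP Q n S) {x : ℕ} {p : (_ : Fin m) × ℕ}
    (hQ1 : 1 ≤ Q p.1)
    (hp : p ∈ (Finset.univ.sigma fun j : Fin m => S j))
    (hxp : x ∈ Finset.Ico p.2 (p.2 + Q p.1)) :
    cfN hval x ∈ Finset.Ico p.2 (p.2 + Q p.1) := by
  rw [cfN_block hval hp hxp]
  rw [Finset.mem_Ico] at hxp ⊢
  split <;> omega

lemma cfN_lt (hval : validP Q n S) (hQ1 : ∀ j, 1 ≤ Q j) {x : ℕ} (hx : x ∈ covered Q S) :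
    cfN hval x < n := by
  have h1 := cfN_mem hval (hQ1 _) (theBlock_mem hval hx) (theBlock_spec hval hx)
  have h2 := hval.1 (theBlock hval hx).1 (theBlock hval hx).2
    (by have := theBlock_mem hval hx; simpa using this)
  rw [Finset.mem_Ico] at h1
  omega

lemma cfN_covered (hval : validP Q n S) {x : ℕ} (hx : x ∈ covered Q S) :
    cfN hval x ∈ covered Q S :=
  Finset.mem_biUnion.mpr ⟨theBlock hval hx, theBlock_mem hval hx,
    cfN_mem hval (by
      have h := theBlock_spec hval hx
      rw [Finset.mem_Ico] at h
      omega) (theBlock_mem hval hx) (theBlock_spec hval hx)⟩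

lemma cfN_injOn (hval : validP Q n S) {x y : ℕ} (hx : x ∈ covered Q S)
    (hy : y ∈ covered Q S) (hxy : cfN hval x = cfN hval y) : x = y := by
  have hpx := theBlock_mem hval hx
  have hpy := theBlock_mem hval hy
  have hsx := theBlock_spec hval hx
  have hsy := theBlock_spec hval hy
  have hq1x : 1 ≤ Q (theBlock hval hx).1 := by rw [Finset.mem_Ico] at hsx; omega
  have hq1y : 1 ≤ Q (theBlock hval hy).1 := by rw [Finset.mem_Ico] at hsy; omega
  have hmx := cfN_mem hval hq1x hpx hsx
  have hmy := cfN_mem hval hq1y hpy hsy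
  rw [hxy] at hmx
  -- cfN y lies in both blocks, so blocks coincide
  have hpeq : theBlock hval hx = theBlock hval hy := by
    by_contra hne
    have hne' : ((theBlock hval hx).1, (theBlock hval hx).2) ≠
        ((theBlock hval hy).1, (theBlock hval hy).2) := by
      intro hcon
      apply hne
      have e1 := congrArg Prod.fst hcon
      have e2 := congrArg Prod.snd hcon
      exact Sigma.ext e1 (by simpa using heq_of_eq e2)
    have hd := hval.2 _ _ (by simpa using hpx) _ _ (by simpa using hpy) hne'
    exact (Finset.disjoint_left.mp hd hmx) hmy
  rw [cfN_block hval hpx hsx, cfN_block hval hpy hsy, hpeq] at hxy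
  rw [hpeq] at hsx
  rw [Finset.mem_Ico] at hsx hsy
  split at hxy <;> split at hxy <;> omega

end Ext
section ExtCount

variable {m n : ℕ} {Q : Fin m → ℕ} {S : Fin m → Finset ℕ}

/-- A permutation containing the prescribed cycles preserves the covered set. -/
lemma cond_pres (hval : validP Q n S) {π : Equiv.Perm (Fin n)}
    (hcond : ∀ j, ∀ a ∈ S j, isAdjCycle (Q j) π a) (x : Fin n) :
    ¬ (x : ℕ) ∈ covered Q S ↔ ¬ ((π x : Fin n) : ℕ) ∈ covered Q S := by
  classical
  have hmap : ∀ y : Fin n, (y : ℕ) ∈ covered Q S → ((π y : Fin n) : ℕ) ∈ covered Q S := by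
    intro y hy
    simp only [covered, Finset.mem_biUnion] at hy ⊢
    obtain ⟨⟨j, a⟩, hp, hyp⟩ := hy
    refine ⟨⟨j, a⟩, hp, ?_⟩
    simp only [Finset.mem_sigma, Finset.mem_univ, true_and] at hp
    rw [Finset.mem_Ico] at hyp
    dsimp only at hyp ⊢
    have hcyc := hcond j a hp
    have := hcyc.2 y hyp.1 hyp.2
    rw [Finset.mem_Ico, this]
    split <;> omega
  set Cf : Finset (Fin n) := Finset.univ.filter (fun y : Fin n => (y : ℕ) ∈ covered Q S) with hCf
  have himg : Cf.image π = Cf := by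
    apply Finset.eq_of_subset_of_card_le
    · intro y hy
      obtain ⟨z, hz, rfl⟩ := Finset.mem_image.mp hy
      simp only [hCf, Finset.mem_filter, Finset.mem_univ, true_and] at hz ⊢
      exact hmap z hz
    · rw [Finset.card_image_of_injective _ π.injective]
  constructor
  · intro hx hπx
    have hmem : π x ∈ Cf := by simp [hCf, hπx]
    rw [← himg] at hmem
    obtain ⟨z, hz, hzx⟩ := Finset.mem_image.mp hmem
    have := π.injective hzx
    subst this
    simp only [hCf, Finset.mem_filter, Finset.mem_univ, true_and] at hz
    exact hx hz
  · intro hπx hx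
    exact hπx (hmap x hx)

lemma ext_count (hQ1 : ∀ j, 1 ≤ Q j) (hval : validP Q n S) :
    (Finset.univ.filter fun π : Equiv.Perm (Fin n) =>
      ∀ j, ∀ a ∈ S j, isAdjCycle (Q j) π a).card
    = (n - ∑ j, Q j * (S j).card).factorial := by
  classical
  have hcard1 : (Finset.univ.filter fun x : Fin n => (x : ℕ) ∈ covered Q S).card
      = ∑ j, Q j * (S j).card := by
    rw [← covered_card hval]
    apply Finset.card_bij (fun (x : Fin n) _ => (x : ℕ))
    · intro x hx
      exact (Finset.mem_filter.mp hx).2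
    · intro x _ y _ h
      exact Fin.ext h
    · intro b hb
      have hbn : b < n := Finset.mem_range.mp (covered_subset hval hb)
      exact ⟨⟨b, hbn⟩, by simp [hb], rfl⟩
  have hcard2 : (Finset.univ.filter fun x : Fin n => ¬ (x : ℕ) ∈ covered Q S).card
      = n - ∑ j, Q j * (S j).card := by
    have h := Finset.card_filter_add_card_filter_not
      (s := (Finset.univ : Finset (Fin n))) (p := fun x : Fin n => (x : ℕ) ∈ covered Q S)
    rw [Finset.card_univ, Fintype.card_fin, hcard1] at h
    omega
  have hperm : ((Finset.univ : Finset (Equiv.Perm {x : Fin n // ¬ (x : ℕ) ∈ covered Q S})).card)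
      = (n - ∑ j, Q j * (S j).card).factorial := by
    rw [Finset.card_univ, Fintype.card_perm, Fintype.card_subtype, hcard2]
  rw [← hperm]
  apply Finset.card_bij (fun π hπ => Equiv.Perm.subtypePerm π
    (fun x => (cond_pres hval (Finset.mem_filter.mp hπ).2 x).symm))
  · intro π hπ
    exact Finset.mem_univ _
  · -- injectivity
    intro π hπ π' hπ' heq
    have hc := (Finset.mem_filter.mp hπ).2
    have hc' := (Finset.mem_filter.mp hπ').2
    ext x
    by_cases hx : (x : ℕ) ∈ covered Q S
    · simp only [covered, Finset.mem_biUnion] at hx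
      obtain ⟨⟨j, a⟩, hp, hxp⟩ := hx
      simp only [Finset.mem_sigma, Finset.mem_univ, true_and] at hp
      rw [Finset.mem_Ico] at hxp
      dsimp only at hxp
      have h1 := (hc j a hp).2 x hxp.1 hxp.2
      have h2 := (hc' j a hp).2 x hxp.1 hxp.2
      rw [h1, h2]
    · have := congrArg (fun σ => ((σ ⟨x, hx⟩ : {y : Fin n // ¬ (y : ℕ) ∈ covered Q S}) : Fin n))
        heq
      exact congrArg Fin.val (by simpa using this)
  · -- surjectivity
    intro σ _
    set g : Fin n → Fin n := fun x =>
      if hx : (x : ℕ) ∈ covered Q S then ⟨cfN hval (x : ℕ), cfN_lt hval hQ1 hx⟩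
      else (σ ⟨x, hx⟩ : {y : Fin n // ¬ (y : ℕ) ∈ covered Q S}) with hg
    have hginj : Function.Injective g := by
      intro x y hxy
      by_cases hx : (x : ℕ) ∈ covered Q S <;> by_cases hy : (y : ℕ) ∈ covered Q S
      · rw [hg] at hxy
        simp only [dif_pos hx, dif_pos hy] at hxy
        have : cfN hval (x : ℕ) = cfN hval (y : ℕ) := congrArg Fin.val hxy
        exact Fin.ext (cfN_injOn hval hx hy this)
      · exfalso
        rw [hg] at hxy
        simp only [dif_pos hx, dif_neg hy] at hxy
        have h1 : cfN hval (x : ℕ) ∈ covered Q S := cfN_covered hval hx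
        have h2 := (σ ⟨y, hy⟩).2
        rw [← congrArg Fin.val hxy] at h2
        exact h2 h1
      · exfalso
        rw [hg] at hxy
        simp only [dif_neg hx, dif_pos hy] at hxy
        have h1 : cfN hval (y : ℕ) ∈ covered Q S := cfN_covered hval hy
        have h2 := (σ ⟨x, hx⟩).2
        rw [congrArg Fin.val hxy] at h2
        exact h2 h1
      · rw [hg] at hxy
        simp only [dif_neg hx, dif_neg hy] at hxy
        have := σ.injective (Subtype.ext hxy)
        simpa using congrArg Subtype.val this
    set π : Equiv.Perm (Fin n) := Equiv.ofBijective g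
      (Finite.injective_iff_bijective.mp hginj) with hπdef
    have hπapp : ∀ x, π x = g x := fun x => rfl
    have hcond : ∀ j, ∀ a ∈ S j, isAdjCycle (Q j) π a := by
      intro j a ha
      refine ⟨hval.1 j a ha, ?_⟩
      intro i hi1 hi2
      have hiC : (i : ℕ) ∈ covered Q S := by
        apply Finset.mem_biUnion.mpr
        exact ⟨⟨j, a⟩, by simp [ha], by rw [Finset.mem_Ico]; exact ⟨hi1, hi2⟩⟩
      rw [hπapp, hg]
      simp only [dif_pos hiC]
      exact cfN_block hval (p := ⟨j, a⟩) (by simp [ha]) (by rw [Finset.mem_Ico]; exact ⟨hi1, hi2⟩)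
    refine ⟨π, Finset.mem_filter.mpr ⟨Finset.mem_univ _, hcond⟩, ?_⟩
    ext x
    have hx := x.2
    have : π (x : Fin n) = g (x : Fin n) := rfl
    simp only [Equiv.Perm.subtypePerm_apply]
    rw [this, hg]
    simp only [dif_neg hx]

end ExtCount
section DoubleCount

variable {m n : ℕ} {Q : Fin m → ℕ}

lemma double_count (hQinj : Function.Injective Q) (hQ1 : ∀ j, 1 ≤ Q j) (t : Fin m → ℕ) :
    ∑ π : Equiv.Perm (Fin n), ∏ j, (adjCycleCount (Q j) π).choose (t j)
    = (placements Q n t).card * (n - ∑ j, Q j * t j).factorial := by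
  classical
  have hstep1 : ∀ π : Equiv.Perm (Fin n), ∏ j, (adjCycleCount (Q j) π).choose (t j)
      = (Fintype.piFinset fun j => (startsF (Q j) π).powersetCard (t j)).card := by
    intro π
    rw [Fintype.card_piFinset]
    exact Finset.prod_congr rfl fun j _ => by
      rw [Finset.card_powersetCard, adjCycleCount_eq_card]
  have hstep2 : ∀ S ∈ placements Q n t,
      (Finset.univ.filter fun π : Equiv.Perm (Fin n) =>
        ∀ j, ∀ a ∈ S j, isAdjCycle (Q j) π a).card = (n - ∑ j, Q j * t j).factorial := by
    intro S hS
    rw [placements, Finset.mem_filter] at hS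
    rw [ext_count hQ1 hS.2.1]
    congr 2
    exact Finset.sum_congr rfl fun j _ => by rw [hS.2.2 j]
  calc ∑ π : Equiv.Perm (Fin n), ∏ j, (adjCycleCount (Q j) π).choose (t j)
      = ((Finset.univ : Finset (Equiv.Perm (Fin n))).sigma
          fun π => Fintype.piFinset fun j => (startsF (Q j) π).powersetCard (t j)).card := by
        rw [Finset.card_sigma]
        exact Finset.sum_congr rfl fun π _ => hstep1 π
    _ = ((placements Q n t).sigma fun S =>
          (Finset.univ.filter fun π : Equiv.Perm (Fin n) =>
            ∀ j, ∀ a ∈ S j, isAdjCycle (Q j) π a)).card := by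
        apply Finset.card_bij (fun p _ => ⟨p.2, p.1⟩)
        · rintro ⟨π, S⟩ hp
          rw [Finset.mem_sigma] at hp
          have hS := hp.2
          rw [Fintype.mem_piFinset] at hS
          have hS' : ∀ j, S j ⊆ startsF (Q j) π ∧ (S j).card = t j := by
            intro j
            have := hS j
            rw [Finset.mem_powersetCard] at this
            exact this
          rw [Finset.mem_sigma]
          constructor
          · rw [placements, Finset.mem_filter]
            refine ⟨?_, validP_of_starts hQinj hQ1 π (fun j => (hS' j).1), fun j => (hS' j).2⟩
            rw [Fintype.mem_piFinset]
            intro j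
            rw [Finset.mem_powerset]
            exact (hS' j).1.trans (Finset.filter_subset _ _)
          · rw [Finset.mem_filter]
            refine ⟨Finset.mem_univ _, fun j a ha => ?_⟩
            have := (hS' j).1 ha
            rw [startsF, Finset.mem_filter] at this
            exact this.2
        · rintro ⟨π, S⟩ _ ⟨π', S'⟩ _ h
          injection h with h1 h2
          subst h1
          exact Sigma.ext h2 HEq.rfl
        · rintro ⟨S, π⟩ hp
          rw [Finset.mem_sigma, placements, Finset.mem_filter, Finset.mem_filter] at hp
          obtain ⟨⟨_, hval, hcards⟩, _, hcond⟩ := hp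
          refine ⟨⟨π, S⟩, ?_, rfl⟩
          rw [Finset.mem_sigma]
          refine ⟨Finset.mem_univ _, ?_⟩
          rw [Fintype.mem_piFinset]
          intro j
          rw [Finset.mem_powersetCard]
          refine ⟨fun a ha => ?_, hcards j⟩
          rw [startsF, Finset.mem_filter, Finset.mem_range]
          have h1 := hval.1 j a ha
          have h2 := hQ1 j
          exact ⟨by omega, hcond j a ha⟩
    _ = (placements Q n t).card * (n - ∑ j, Q j * t j).factorial := by
        rw [Finset.card_sigma, Finset.sum_congr rfl hstep2, Finset.sum_const, smul_eq_mul]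

end DoubleCount
section Placements

variable {m n : ℕ} {Q : Fin m → ℕ} {t : Fin m → ℕ}

lemma mem_placements {S : Fin m → Finset ℕ} :
    S ∈ placements Q n t ↔
      (∀ j, S j ⊆ Finset.range n) ∧ validP Q n S ∧ ∀ j, (S j).card = t j := by
  classical
  rw [placements, Finset.mem_filter, Fintype.mem_piFinset]
  simp only [Finset.mem_powerset]

lemma placements_eq_empty (h : n < ∑ j, Q j * t j) : placements Q n t = ∅ := by
  classical
  rw [Finset.eq_empty_iff_forall_notMem]
  intro S hS
  rw [mem_placements] at hS
  have h1 := validP_sum_le hS.2.1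
  have h2 : ∑ j, Q j * (S j).card = ∑ j, Q j * t j :=
    Finset.sum_congr rfl fun j _ => by rw [hS.2.2 j]
  omega

lemma placements_split (hQ1 : ∀ j, 1 ≤ Q j) :
    (placements Q n t).card
      = ((placements Q n t).filter (fun S => ∀ j, ¬ (n - Q j) ∈ S j)).card
        + ∑ j, ((placements Q n t).filter (fun S => (n - Q j) ∈ S j)).card := by
  classical
  have h := Finset.card_filter_add_card_filter_not (s := placements Q n t)
    (p := fun S => ∀ j, ¬ (n - Q j) ∈ S j)
  have h2 : (placements Q n t).filter (fun S => ¬ ∀ j, ¬ (n - Q j) ∈ S j)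
      = Finset.univ.biUnion
          (fun j => (placements Q n t).filter (fun S => (n - Q j) ∈ S j)) := by
    ext S
    simp only [Finset.mem_filter, Finset.mem_biUnion, Finset.mem_univ, true_and,
      not_forall, not_not]
    tauto
  have hdisj2 : ∀ j ∈ (Finset.univ : Finset (Fin m)), ∀ j' ∈ Finset.univ, j ≠ j' →
      Disjoint ((placements Q n t).filter (fun S => (n - Q j) ∈ S j))
        ((placements Q n t).filter (fun S => (n - Q j') ∈ S j')) := by
    clear h h2
    intro j _ j' _ hjj'
    rw [Finset.disjoint_left]
    intro S hS hS'
    rw [Finset.mem_filter] at hS hS'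
    have hP := hS.1
    rw [mem_placements] at hP
    have hval := hP.2.1
    have hj : n - Q j ∈ S j := hS.2
    have hj' : n - Q j' ∈ S j' := hS'.2
    have hb1 := hval.1 j (n - Q j) hj
    have hb1' := hval.1 j' (n - Q j') hj'
    have hq1 := hQ1 j
    have hq1' := hQ1 j'
    have hqn : Q j ≤ n := by omega
    have hqn' : Q j' ≤ n := by omega
    have hdisj := hval.2 j (n - Q j) hj j' (n - Q j') hj' (by
      intro hcon
      exact hjj' (congrArg Prod.fst hcon))
    rw [Finset.disjoint_left] at hdisj
    have hm1 : n - 1 ∈ Finset.Ico (n - Q j) (n - Q j + Q j) := by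
      rw [Finset.mem_Ico]; omega
    have hm2 : n - 1 ∈ Finset.Ico (n - Q j') (n - Q j' + Q j') := by
      rw [Finset.mem_Ico]; omega
    exact (hdisj hm1) hm2
  rw [h2, Finset.card_biUnion (by intro j _ j' _ hne; exact hdisj2 j (Finset.mem_univ _) j' (Finset.mem_univ _) hne)] at h
  exact h.symm

lemma placements_filter_none (hQ1 : ∀ j, 1 ≤ Q j) (hn : 1 ≤ n) :
    (placements Q n t).filter (fun S => ∀ j, ¬ (n - Q j) ∈ S j)
      = placements Q (n - 1) t := by
  classical
  ext S
  rw [Finset.mem_filter, mem_placements, mem_placements]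
  constructor
  · rintro ⟨⟨hsub, hval, hcard⟩, hnone⟩
    have hfar : ∀ j, ∀ a ∈ S j, a + Q j ≤ n - 1 := by
      intro j a ha
      have h1 := hval.1 j a ha
      have h2 := hnone j
      have h3 : a ≠ n - Q j := fun hcon => h2 (hcon ▸ ha)
      have := hQ1 j
      omega
    refine ⟨fun j a ha => ?_, ⟨hfar, hval.2⟩, hcard⟩
    rw [Finset.mem_range]
    have := hfar j a ha
    have := hQ1 j
    omega
  · rintro ⟨hsub, hval, hcard⟩
    have hv1 : ∀ j, ∀ a ∈ S j, a + Q j ≤ n := fun j a ha => (hval.1 j a ha).trans (by omega)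
    refine ⟨⟨fun j a ha => ?_, ⟨hv1, hval.2⟩, hcard⟩, fun j hmem => ?_⟩
    · rw [Finset.mem_range]
      have := hval.1 j a ha
      have := hQ1 j
      omega
    · have h1 := hval.1 j _ hmem
      have := hQ1 j
      omega

lemma placements_filter_mem (hQ1 : ∀ j, 1 ≤ Q j) (j : Fin m) (hQn : Q j ≤ n)
    (htj : 1 ≤ t j) :
    ((placements Q n t).filter (fun S => (n - Q j) ∈ S j)).card
      = (placements Q (n - Q j) (Function.update t j (t j - 1))).card := by
  classical
  apply Finset.card_nbij' (fun S => Function.update S j ((S j).erase (n - Q j)))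
    (fun T => Function.update T j (insert (n - Q j) (T j)))
  · -- forward maps into target
    intro S hS
    rw [Finset.mem_coe, Finset.mem_filter, mem_placements] at hS
    obtain ⟨⟨hsub, hval, hcard⟩, hmem⟩ := hS
    have hfar : ∀ i, ∀ a ∈ S i, (i, a) ≠ (j, n - Q j) → a + Q i ≤ n - Q j := by
      intro i a ha hne
      have hdisj := hval.2 i a ha j (n - Q j) hmem hne
      rw [Finset.disjoint_left] at hdisj
      by_contra hcon
      have h1 := hval.1 i a ha
      have h2 := hQ1 i
      have : a + Q i - 1 ∈ Finset.Ico a (a + Q i) := by rw [Finset.mem_Ico]; omega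
      have h3 := hdisj this
      rw [Finset.mem_Ico] at h3
      omega
    have hmem' : ∀ i, ∀ a ∈ Function.update S j ((S j).erase (n - Q j)) i, a ∈ S i ∧
        (i, a) ≠ (j, n - Q j) := by
      intro i a ha
      by_cases hij : i = j
      · subst hij
        rw [Function.update_self] at ha
        exact ⟨Finset.mem_of_mem_erase ha, by
          intro hcon
          exact (Finset.ne_of_mem_erase ha) (congrArg Prod.snd hcon)⟩
      · rw [Function.update_of_ne hij] at ha
        exact ⟨ha, by
          intro hcon
          exact hij (congrArg Prod.fst hcon)⟩
    rw [Finset.mem_coe, mem_placements]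
    refine ⟨fun i a ha => ?_, ⟨fun i a ha => ?_, ?_⟩, fun i => ?_⟩
    · obtain ⟨ha', hne⟩ := hmem' i a ha
      rw [Finset.mem_range]
      have := hfar i a ha' hne
      have := hQ1 i
      omega
    · obtain ⟨ha', hne⟩ := hmem' i a ha
      exact hfar i a ha' hne
    · intro i a ha i' a' ha' hne
      exact hval.2 i a (hmem' i a ha).1 i' a' (hmem' i' a' ha').1 hne
    · by_cases hij : i = j
      · subst hij
        beta_reduce; rw [Function.update_self, Function.update_self, Finset.card_erase_of_mem hmem, hcard]
      · beta_reduce; rw [Function.update_of_ne hij, Function.update_of_ne hij, hcard]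
  · -- backward maps into source
    intro T hT
    rw [Finset.mem_coe, mem_placements] at hT
    obtain ⟨hsub, hval, hcard⟩ := hT
    have hnotin : (n - Q j) ∉ T j := by
      intro hcon
      have := hsub j hcon
      rw [Finset.mem_range] at this
      omega
    have hmem' : ∀ i, ∀ a ∈ Function.update T j (insert (n - Q j) (T j)) i,
        a ∈ T i ∨ (i = j ∧ a = n - Q j) := by
      intro i a ha
      by_cases hij : i = j
      · subst hij
        rw [Function.update_self, Finset.mem_insert] at ha
        tauto
      · rw [Function.update_of_ne hij] at ha
        exact Or.inl ha
    have hTbound : ∀ i, ∀ a ∈ T i, a + Q i ≤ n - Q j := fun i a ha => hval.1 i a ha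
    rw [Finset.mem_coe, Finset.mem_filter, mem_placements]
    refine ⟨⟨fun i a ha => ?_, ⟨fun i a ha => ?_, ?_⟩, fun i => ?_⟩, ?_⟩
    · rw [Finset.mem_range]
      have h1i := hQ1 i
      rcases hmem' i a ha with h | ⟨rfl, rfl⟩
      · have := hTbound i a h
        omega
      · omega
    · have h1i := hQ1 i
      rcases hmem' i a ha with h | ⟨rfl, rfl⟩
      · have := hTbound i a h
        omega
      · omega
    · intro i a ha i' a' ha' hne
      rcases hmem' i a ha with h | ⟨rfl, rfl⟩ <;> rcases hmem' i' a' ha' with h' | ⟨rfl, rfl⟩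
      · exact hval.2 i a h i' a' h' hne
      · rw [Finset.disjoint_left]
        intro x hx hx'
        rw [Finset.mem_Ico] at hx hx'
        have := hTbound i a h
        omega
      · rw [Finset.disjoint_left]
        intro x hx hx'
        rw [Finset.mem_Ico] at hx hx'
        have := hTbound i' a' h'
        omega
      · exact absurd rfl hne
    · by_cases hij : i = j
      · subst hij
        beta_reduce; rw [Function.update_self, Finset.card_insert_of_notMem hnotin, hcard,
          Function.update_self]
        omega
      · beta_reduce; rw [Function.update_of_ne hij, hcard, Function.update_of_ne hij]
    · beta_reduce; rw [Function.update_self]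
      exact Finset.mem_insert_self _ _
  · -- left inverse
    intro S hS
    rw [Finset.mem_coe, Finset.mem_filter] at hS
    funext i
    by_cases hij : i = j
    · subst hij
      beta_reduce; rw [Function.update_self, Function.update_self, Finset.insert_erase hS.2]
    · beta_reduce; rw [Function.update_of_ne hij, Function.update_of_ne hij]
  · -- right inverse
    intro T hT
    rw [Finset.mem_coe, mem_placements] at hT
    have hnotin : (n - Q j) ∉ T j := by
      intro hcon
      have := hT.1 j hcon
      rw [Finset.mem_range] at this
      omega
    funext i
    by_cases hij : i = j
    · subst hij
      beta_reduce; rw [Function.update_self, Function.update_self, Finset.erase_insert hnotin]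
    · beta_reduce; rw [Function.update_of_ne hij, Function.update_of_ne hij]

end Placements
section CardMul

lemma placements_card_mul {m : ℕ} {Q : Fin m → ℕ} (hQ1 : ∀ j, 1 ≤ Q j) :
    ∀ n : ℕ, ∀ t : Fin m → ℕ, ∑ j, Q j * t j ≤ n →
      (placements Q n t).card * ((∏ j, (t j).factorial) * (n - ∑ j, Q j * t j).factorial)
        = (n - ∑ j, (Q j - 1) * t j).factorial := by
  classical
  have hDBgen : ∀ s : Fin m → ℕ, (∑ j, (Q j - 1) * s j) + (∑ j, s j) = ∑ j, Q j * s j := by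
    intro s
    rw [← Finset.sum_add_distrib]
    refine Finset.sum_congr rfl fun j _ => ?_
    obtain ⟨q', hq'⟩ : ∃ q', Q j = q' + 1 := ⟨Q j - 1, by have := hQ1 j; omega⟩
    rw [hq', Nat.add_sub_cancel, Nat.succ_mul]
  have hmulsub : ∀ (p s : ℕ), 1 ≤ s → p * (s - 1) = p * s - p := by
    intro p s hs
    obtain ⟨s', rfl⟩ : ∃ s', s = s' + 1 := ⟨s - 1, by omega⟩
    rw [Nat.add_sub_cancel, Nat.mul_add, Nat.mul_one, Nat.add_sub_cancel]
  intro n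
  induction n using Nat.strong_induction_on with
  | _ n ih =>
  intro t ht
  rcases Nat.eq_zero_or_pos n with hn0 | hn1
  · subst hn0
    have ht0 : ∀ j, t j = 0 := by
      intro j
      have h1 : Q j * t j ≤ ∑ i, Q i * t i :=
        Finset.single_le_sum (f := fun i => Q i * t i) (fun i _ => Nat.zero_le _)
          (Finset.mem_univ j)
      have h2 : Q j * t j = 0 := by omega
      rcases Nat.mul_eq_zero.mp h2 with h | h
      · exact absurd h (by have := hQ1 j; omega)
      · exact h
    have hpl : placements Q 0 t = {fun _ => (∅ : Finset ℕ)} := by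
      ext S
      rw [mem_placements]
      simp only [Finset.mem_singleton]
      constructor
      · rintro ⟨hsub, _, _⟩
        funext j
        have h := hsub j
        rw [Finset.range_zero, Finset.subset_empty] at h
        exact h
      · rintro rfl
        exact ⟨fun j => by simp, ⟨fun j a ha => by simp at ha, fun j a ha => by simp at ha⟩,
          fun j => by simp [ht0 j]⟩
    rw [hpl]
    simp [ht0]
  · -- inductive step, n ≥ 1
    -- the value of each filtered piece
    have hterm : ∀ j, ((placements Q n t).filter (fun S => (n - Q j) ∈ S j)).card
        * ((∏ i, (t i).factorial) * (n - ∑ i, Q i * t i).factorial)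
        = t j * (n - ∑ i, (Q i - 1) * t i - 1).factorial := by
      intro j
      by_cases htj : 1 ≤ t j
      · have hQAj : Q j * t j ≤ ∑ i, Q i * t i :=
          Finset.single_le_sum (f := fun i => Q i * t i) (fun i _ => Nat.zero_le _)
            (Finset.mem_univ j)
        have hQj1 := hQ1 j
        have hQjA : Q j ≤ ∑ i, Q i * t i := by nlinarith [hQAj]
        have hQn : Q j ≤ n := le_trans hQjA ht
        have hBj : t j ≤ ∑ i, t i :=
          Finset.single_le_sum (f := fun i => t i) (fun i _ => Nat.zero_le _)
            (Finset.mem_univ j)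
        rw [placements_filter_mem hQ1 j hQn htj]
        -- arithmetic about the updated tuple
        have hne : ∀ i, i ∈ Finset.univ \ {j} → ¬ i = j := by
          intro i hi
          rw [Finset.mem_sdiff, Finset.mem_singleton] at hi
          exact hi.2
        have hQP : Q j ≤ Q j * t j := Nat.le_mul_of_pos_right _ htj
        have hA' : ∑ i, Q i * (Function.update t j (t j - 1)) i
            = (∑ i, Q i * t i) - Q j := by
          have e1 : ∑ i, Q i * (Function.update t j (t j - 1)) i
              = (∑ i ∈ Finset.univ \ {j}, Q i * t i) + Q j * (t j - 1) := by
            rw [Finset.sum_eq_sum_sdiff_singleton_add (Finset.mem_univ j)]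
            rw [Function.update_self]
            congr 1
            refine Finset.sum_congr rfl fun i hi => ?_
            rw [Function.update_of_ne (hne i hi)]
          have e2 : ∑ i, Q i * t i
              = (∑ i ∈ Finset.univ \ {j}, Q i * t i) + Q j * t j :=
            Finset.sum_eq_sum_sdiff_singleton_add (Finset.mem_univ j) _
          rw [e1, e2, hmulsub (Q j) (t j) htj]
          omega
        have hB' : ∑ i, (Function.update t j (t j - 1)) i = (∑ i, t i) - 1 := by
          have e1 : ∑ i, (Function.update t j (t j - 1)) i
              = (∑ i ∈ Finset.univ \ {j}, t i) + (t j - 1) := by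
            rw [Finset.sum_eq_sum_sdiff_singleton_add (Finset.mem_univ j)]
            rw [Function.update_self]
            congr 1
            refine Finset.sum_congr rfl fun i hi => ?_
            rw [Function.update_of_ne (hne i hi)]
          have e2 : ∑ i, t i = (∑ i ∈ Finset.univ \ {j}, t i) + t j :=
            Finset.sum_eq_sum_sdiff_singleton_add (Finset.mem_univ j) _
          rw [e1, e2]
          omega
        have hProd : ∏ i, (t i).factorial
            = t j * ∏ i, ((Function.update t j (t j - 1)) i).factorial := by
          have e1 : ∏ i, ((Function.update t j (t j - 1)) i).factorial
              = (∏ i ∈ Finset.univ \ {j}, (t i).factorial) * (t j - 1).factorial := by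
            rw [Finset.prod_eq_prod_diff_singleton_mul (Finset.mem_univ j)]
            rw [Function.update_self]
            congr 1
            refine Finset.prod_congr rfl fun i hi => ?_
            rw [Function.update_of_ne (hne i hi)]
          have e2 : ∏ i, (t i).factorial
              = (∏ i ∈ Finset.univ \ {j}, (t i).factorial) * (t j).factorial :=
            Finset.prod_eq_prod_diff_singleton_mul (Finset.mem_univ j) _
          rw [e1, e2]
          obtain ⟨s', hs'⟩ : ∃ s', t j = s' + 1 := ⟨t j - 1, by omega⟩
          rw [hs', Nat.add_sub_cancel, Nat.factorial_succ]
          ring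
        have hih := ih (n - Q j) (by omega) (Function.update t j (t j - 1))
          (by rw [hA']; omega)
        rw [hA'] at hih
        have hr' : n - Q j - ((∑ i, Q i * t i) - Q j) = n - ∑ i, Q i * t i := by omega
        rw [hr'] at hih
        -- identify the RHS exponent
        have hDB := hDBgen t
        have hDB' := hDBgen (Function.update t j (t j - 1))
        rw [hA', hB'] at hDB'
        have hD' : n - Q j - ∑ i, (Q i - 1) * (Function.update t j (t j - 1)) i
            = n - (∑ i, (Q i - 1) * t i) - 1 := by omega
        rw [hD'] at hih
        calc (placements Q (n - Q j) (Function.update t j (t j - 1))).card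
            * ((∏ i, (t i).factorial) * (n - ∑ i, Q i * t i).factorial)
            = t j * ((placements Q (n - Q j) (Function.update t j (t j - 1))).card
              * ((∏ i, ((Function.update t j (t j - 1)) i).factorial)
                * (n - ∑ i, Q i * t i).factorial)) := by
              rw [hProd]; ring
          _ = t j * (n - (∑ i, (Q i - 1) * t i) - 1).factorial := by rw [hih]
      · -- t j = 0 : the filtered set is empty
        have h0 : t j = 0 := by omega
        have hempty : (placements Q n t).filter (fun S => (n - Q j) ∈ S j) = ∅ := by
          rw [Finset.eq_empty_iff_forall_notMem]
          intro S hS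
          rw [Finset.mem_filter, mem_placements] at hS
          have hc := hS.1.2.2 j
          have h1 : S j ≠ ∅ := Finset.ne_empty_of_mem hS.2
          have h2 : 0 < (S j).card :=
            Finset.card_pos.mpr (Finset.nonempty_iff_ne_empty.mpr h1)
          omega
        rw [hempty, h0, Finset.card_empty, Nat.zero_mul, Nat.zero_mul]
    -- the unfiltered piece
    have hfirst : (placements Q (n - 1) t).card
        * ((∏ i, (t i).factorial) * (n - ∑ i, Q i * t i).factorial)
        = (n - ∑ i, Q i * t i) * (n - ∑ i, (Q i - 1) * t i - 1).factorial := by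
      have hDB := hDBgen t
      by_cases hAn : ∑ i, Q i * t i ≤ n - 1
      · have hih := ih (n - 1) (by omega) t hAn
        have e1 : n - 1 - ∑ i, (Q i - 1) * t i = n - (∑ i, (Q i - 1) * t i) - 1 := by omega
        rw [e1] at hih
        have e2 : n - ∑ i, Q i * t i = (n - 1 - ∑ i, Q i * t i) + 1 := by omega
        rw [e2, Nat.factorial_succ, ← e2]
        calc (placements Q (n - 1) t).card * ((∏ i, (t i).factorial)
              * ((n - ∑ i, Q i * t i) * (n - 1 - ∑ i, Q i * t i).factorial))
            = (n - ∑ i, Q i * t i) * ((placements Q (n - 1) t).card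
              * ((∏ i, (t i).factorial) * (n - 1 - ∑ i, Q i * t i).factorial)) := by ring
          _ = (n - ∑ i, Q i * t i) * (n - (∑ i, (Q i - 1) * t i) - 1).factorial := by rw [hih]
      · have hAeq : ∑ i, Q i * t i = n := by omega
        have hempty : placements Q (n - 1) t = ∅ := placements_eq_empty (by omega)
        rw [hempty, Finset.card_empty, Nat.zero_mul, hAeq, Nat.sub_self, Nat.zero_mul]
    -- put everything together
    rw [placements_split hQ1, placements_filter_none hQ1 hn1, Nat.add_mul, Finset.sum_mul,
      hfirst, Finset.sum_congr rfl fun j _ => hterm j, ← Finset.sum_mul, ← Nat.add_mul]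
    have hDB := hDBgen t
    have hN1 : 1 ≤ n - ∑ i, (Q i - 1) * t i := by
      by_contra hcon
      have h1 : n - ∑ i, (Q i - 1) * t i = 0 := by omega
      have h2 : ∑ i, t i = 0 := by omega
      have h3 : ∀ i, t i = 0 := by
        intro i
        have h5 : t i ≤ ∑ i', t i' :=
          Finset.single_le_sum (f := fun i => t i) (fun i _ => Nat.zero_le _)
            (Finset.mem_univ i)
        omega
      have h4 : ∑ i, Q i * t i = 0 :=
        Finset.sum_eq_zero fun i _ => by rw [h3 i, Nat.mul_zero]
      omega
    rw [show (n - ∑ i, Q i * t i) + ∑ j, t j = n - ∑ i, (Q i - 1) * t i by omega]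
    exact Nat.mul_factorial_pred (by omega)
end CardMul
section Inversion

lemma inv1 (n c k : ℕ) (hc : c ≤ n) :
    (∑ x ∈ Finset.range (n + 1), (-1 : ℚ) ^ (k + x) * (x.choose k : ℚ) * (c.choose x : ℚ))
      = if c = k then 1 else 0 := by
  have hsub : Finset.Ico k (c + 1) ⊆ Finset.range (n + 1) := by
    intro x hx
    rw [Finset.mem_Ico] at hx
    rw [Finset.mem_range]
    omega
  have hzero : ∀ x ∈ Finset.range (n + 1), x ∉ Finset.Ico k (c + 1) →
      (-1 : ℚ) ^ (k + x) * (x.choose k : ℚ) * (c.choose x : ℚ) = 0 := by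
    intro x _ hnx
    rw [Finset.mem_Ico] at hnx
    push_neg at hnx
    rcases Nat.lt_or_ge x k with h | h
    · rw [Nat.choose_eq_zero_of_lt h]
      push_cast
      ring
    · have hcx : c < x := by omega
      rw [Nat.choose_eq_zero_of_lt hcx]
      push_cast
      ring
  rw [← Finset.sum_subset hsub hzero]
  by_cases hck : k ≤ c
  · rw [Finset.sum_Ico_eq_sum_range]
    have hterm : ∀ i ∈ Finset.range (c + 1 - k),
        (-1 : ℚ) ^ (k + (k + i)) * (((k + i).choose k : ℕ) : ℚ) * ((c.choose (k + i) : ℕ) : ℚ)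
          = (c.choose k : ℚ) * ((-1 : ℚ) ^ i * (((c - k).choose i : ℕ) : ℚ)) := by
      intro i hi
      rw [Finset.mem_range] at hi
      have hmul := Nat.choose_mul (n := c) (Nat.le_add_right k i)
      rw [Nat.add_sub_cancel_left] at hmul
      have hmulQ : ((c.choose (k + i) : ℕ) : ℚ) * (((k + i).choose k : ℕ) : ℚ)
          = ((c.choose k : ℕ) : ℚ) * (((c - k).choose i : ℕ) : ℚ) := by
        exact_mod_cast congrArg (fun z : ℕ => (z : ℚ)) hmul
      have hsign : (-1 : ℚ) ^ (k + (k + i)) = (-1 : ℚ) ^ i := by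
        rw [show k + (k + i) = 2 * k + i by ring, pow_add, pow_mul]
        norm_num
      calc (-1 : ℚ) ^ (k + (k + i)) * (((k + i).choose k : ℕ) : ℚ) * ((c.choose (k + i) : ℕ) : ℚ)
          = (-1 : ℚ) ^ i * (((c.choose (k + i) : ℕ) : ℚ) * (((k + i).choose k : ℕ) : ℚ)) := by
            rw [hsign]; ring
        _ = (-1 : ℚ) ^ i * (((c.choose k : ℕ) : ℚ) * (((c - k).choose i : ℕ) : ℚ)) := by
            rw [hmulQ]
        _ = (c.choose k : ℚ) * ((-1 : ℚ) ^ i * (((c - k).choose i : ℕ) : ℚ)) := by ring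
    rw [Finset.sum_congr rfl hterm, ← Finset.mul_sum]
    have heq : c + 1 - k = (c - k) + 1 := by omega
    rw [heq]
    have halt' : (∑ i ∈ Finset.range ((c - k) + 1), (-1 : ℚ) ^ i * (((c - k).choose i : ℕ) : ℚ))
        = if c - k = 0 then 1 else 0 := by
      by_cases h0 : c - k = 0
      · rw [if_pos h0, h0]
        simp
      · rw [if_neg h0]
        have hz := Int.alternating_sum_range_choose_of_ne h0
        exact_mod_cast congrArg (fun z : ℤ => (z : ℚ)) hz
    rw [halt']
    by_cases hck2 : c = k
    · rw [if_pos (by omega : c - k = 0), if_pos hck2, hck2, Nat.choose_self]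
      norm_num
    · rw [if_neg (by omega : ¬ c - k = 0), if_neg hck2, mul_zero]
  · have hemp : Finset.Ico k (c + 1) = ∅ := Finset.Ico_eq_empty (by omega)
    rw [hemp, Finset.sum_empty, if_neg (by omega)]

end Inversion
theorem stmt14 (m n : ℕ) (Q : Fin m → ℕ) (hQ : StrictMono Q) (hQ1 : ∀ j, 1 ≤ Q j)
    (hn : 1 ≤ n) (k : Fin m → ℕ) :
    (numMulti Q n k : ℚ) =
      ∑ t ∈ (Fintype.piFinset fun _ : Fin m => Finset.range (n + 1)).filter
          (fun t => ∑ j, Q j * t j ≤ n),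
        (-1 : ℚ) ^ (∑ j, (k j + t j)) * (∏ j, ((t j).choose (k j)) : ℚ) *
          ((n - ∑ j, (Q j - 1) * t j).factorial : ℚ) / ((∏ j, (t j).factorial : ℕ) : ℚ) := by
  classical
  have hQinj : Function.Injective Q := hQ.injective
  -- Step A : identify each term of the RHS with a permutation sum
  have hstepA : ∀ t ∈ (Fintype.piFinset fun _ : Fin m => Finset.range (n + 1)).filter
      (fun t => ∑ j, Q j * t j ≤ n),
      (-1 : ℚ) ^ (∑ j, (k j + t j)) * (∏ j, ((t j).choose (k j)) : ℚ) *
          ((n - ∑ j, (Q j - 1) * t j).factorial : ℚ) / ((∏ j, (t j).factorial : ℕ) : ℚ)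
        = (-1 : ℚ) ^ (∑ j, (k j + t j)) * (∏ j, ((t j).choose (k j)) : ℚ) *
          ((∑ π : Equiv.Perm (Fin n), ∏ j, (adjCycleCount (Q j) π).choose (t j) : ℕ) : ℚ) := by
    intro t htmem
    rw [Finset.mem_filter] at htmem
    have hkey := placements_card_mul hQ1 n t htmem.2
    rw [double_count hQinj hQ1 t]
    have hpos : 0 < ∏ j, (t j).factorial := Finset.prod_pos fun j _ => (t j).factorial_pos
    have hfac0 : ((∏ j, (t j).factorial : ℕ) : ℚ) ≠ 0 :=
      Nat.cast_ne_zero.mpr hpos.ne'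
    rw [div_eq_iff hfac0]
    have hcast := congrArg (fun x : ℕ => (x : ℚ)) hkey
    push_cast at hcast ⊢
    linear_combination (-((-1 : ℚ) ^ (∑ j, (k j + t j)) * (∏ j, ((t j).choose (k j) : ℚ)))) * hcast
  rw [Finset.sum_congr rfl hstepA]
  -- Step B : extend the sum to all of piFinset; extra terms vanish
  have hvanish : ∀ t ∈ (Fintype.piFinset fun _ : Fin m => Finset.range (n + 1)),
      t ∉ (Fintype.piFinset fun _ : Fin m => Finset.range (n + 1)).filter
        (fun t => ∑ j, Q j * t j ≤ n) →
      (-1 : ℚ) ^ (∑ j, (k j + t j)) * (∏ j, ((t j).choose (k j)) : ℚ) *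
          ((∑ π : Equiv.Perm (Fin n), ∏ j, (adjCycleCount (Q j) π).choose (t j) : ℕ) : ℚ)
        = 0 := by
    intro t htpi htnot
    have hgt : ¬ ∑ j, Q j * t j ≤ n := by
      intro hle
      exact htnot (Finset.mem_filter.mpr ⟨htpi, hle⟩)
    have hzero : (∑ π : Equiv.Perm (Fin n), ∏ j, (adjCycleCount (Q j) π).choose (t j)) = 0 := by
      refine Finset.sum_eq_zero fun π _ => ?_
      have hnall : ¬ ∀ j, t j ≤ adjCycleCount (Q j) π := by
        intro hall
        apply hgt
        calc ∑ j, Q j * t j ≤ ∑ j, Q j * adjCycleCount (Q j) π :=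
              Finset.sum_le_sum fun j _ => Nat.mul_le_mul_left _ (hall j)
          _ ≤ n := sum_cycleCount_le hQinj hQ1 π
      push_neg at hnall
      obtain ⟨j, hj⟩ := hnall
      exact Finset.prod_eq_zero (Finset.mem_univ j) (Nat.choose_eq_zero_of_lt hj)
    rw [hzero]
    norm_num
  rw [Finset.sum_subset (Finset.filter_subset _ _) hvanish]
  -- Step C : rewrite each term as a double sum, swap, and evaluate
  have hterm2 : ∀ t ∈ (Fintype.piFinset fun _ : Fin m => Finset.range (n + 1)),
      (-1 : ℚ) ^ (∑ j, (k j + t j)) * (∏ j, ((t j).choose (k j)) : ℚ) *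
          ((∑ π : Equiv.Perm (Fin n), ∏ j, (adjCycleCount (Q j) π).choose (t j) : ℕ) : ℚ)
        = ∑ π : Equiv.Perm (Fin n), ∏ j,
            ((-1 : ℚ) ^ (k j + t j) * ((t j).choose (k j) : ℚ)
              * ((adjCycleCount (Q j) π).choose (t j) : ℚ)) := by
    intro t _
    push_cast
    rw [Finset.mul_sum]
    refine Finset.sum_congr rfl fun π _ => ?_
    rw [Finset.prod_mul_distrib, Finset.prod_mul_distrib, Finset.prod_pow_eq_pow_sum]
  rw [Finset.sum_congr rfl hterm2, Finset.sum_comm]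
  have hinner : ∀ π : Equiv.Perm (Fin n),
      (∑ t ∈ (Fintype.piFinset fun _ : Fin m => Finset.range (n + 1)), ∏ j,
        ((-1 : ℚ) ^ (k j + t j) * ((t j).choose (k j) : ℚ)
          * ((adjCycleCount (Q j) π).choose (t j) : ℚ)))
      = if (∀ j, adjCycleCount (Q j) π = k j) then 1 else 0 := by
    intro π
    have hswap := Finset.prod_univ_sum (fun _ : Fin m => Finset.range (n + 1))
      (fun j x => (-1 : ℚ) ^ (k j + x) * ((x).choose (k j) : ℚ)
        * ((adjCycleCount (Q j) π).choose x : ℚ))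
    rw [show (∑ t ∈ (Fintype.piFinset fun _ : Fin m => Finset.range (n + 1)), ∏ j,
        ((-1 : ℚ) ^ (k j + t j) * ((t j).choose (k j) : ℚ)
          * ((adjCycleCount (Q j) π).choose (t j) : ℚ)))
      = ∏ j, ∑ x ∈ Finset.range (n + 1),
          ((-1 : ℚ) ^ (k j + x) * ((x).choose (k j) : ℚ)
            * ((adjCycleCount (Q j) π).choose x : ℚ)) from hswap.symm]
    have hfac : ∀ j : Fin m, (∑ x ∈ Finset.range (n + 1),
        ((-1 : ℚ) ^ (k j + x) * ((x).choose (k j) : ℚ)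
          * ((adjCycleCount (Q j) π).choose x : ℚ)))
        = if adjCycleCount (Q j) π = k j then 1 else 0 := fun j =>
      inv1 n (adjCycleCount (Q j) π) (k j) (adjCycleCount_le π)
    rw [Finset.prod_congr rfl fun j _ => hfac j, Finset.prod_boole]
    simp
  rw [Finset.sum_congr rfl fun π _ => hinner π]
  rw [numMulti, Finset.sum_boole]
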